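/- arXiv:1911.06016 — 3 statements merged into one kernel-verified Lean document; each statement's English description precedes it below -/
import Mathlib

section
/- Fix distinct reals c_1, ..., c_s. For any distinct λ_1, ..., λ_s ∈ ℂ \ {1}, there exists a unique pair ((θ_1,...,θ_s), D) ∈ ℂ^s × M_s(ℂ) such that V_c^1 = D V_{c-1}^1 + Θ (where Θ is the matrix with first column (θ_1,...,θ_s)^T and all other entries zero) and the spectrum of D is exactly {λ_1, ..., λ_s}. Moreover, if {λ_1,...,λ_s} is stable under complex conjugation, then the θ_i are real and D has real entries. -/
open Polynomial Matrix Finset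

noncomputable section
namespace S12

variable (s : ℕ)

def B : Matrix (Fin s) (Fin s) ℂ := Matrix.of fun k j : Fin s => ((j : ℕ).choose (k : ℕ) : ℂ)

lemma vecMul_B (x : ℂ) :
    (fun k : Fin s => x ^ (k : ℕ)) ᵥ* B s = fun j : Fin s => (x + 1) ^ (j : ℕ) := by
  funext j
  have h1 : ((fun k : Fin s => x ^ (k : ℕ)) ᵥ* B s) j
      = ∑ k : Fin s, x ^ (k : ℕ) * ((j : ℕ).choose (k : ℕ) : ℂ) := by
    simp [vecMul, dotProduct, B]
  rw [h1, Fin.sum_univ_eq_sum_range (fun k => x ^ k * ((j : ℕ).choose k : ℂ)) s]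
  rw [add_pow]
  rw [← Finset.sum_subset (Finset.range_subset_range.2 j.2)]
  · exact Finset.sum_congr rfl fun k _ => by ring
  · intro k _ hk
    rw [Nat.choose_eq_zero_of_lt (by simpa using hk)]
    simp

lemma vand_mul_B (v : Fin s → ℂ) :
    vandermonde v * B s = vandermonde (fun i => v i + 1) := by
  ext i j
  rw [Matrix.mul_apply]
  have := congrFun (vecMul_B s (v i)) j
  simpa [vecMul, dotProduct, B, vandermonde] using this

lemma B_triangular : (B s).BlockTriangular id := by
  intro i j h
  simp only [B, Matrix.of_apply]
  rw [Nat.choose_eq_zero_of_lt (by exact_mod_cast h)]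
  simp

def T : Matrix (Fin s) (Fin s) ℂ[X] := charmatrix (B s)

lemma det_T : (T s).det = (X - 1) ^ s := by
  rw [T, Matrix.det_of_upperTriangular ((charmatrix_blockTriangular_iff).2 (B_triangular s))]
  have : ∀ i : Fin s, charmatrix (B s) i i = X - 1 := by
    intro i
    rw [charmatrix_apply_eq]
    congr 1
    simp [B]
  simp only [this]
  simp

lemma vecMul_T (x : ℂ) :
    (fun k : Fin s => C (x ^ (k : ℕ))) ᵥ* T s =
      fun j : Fin s => X * C (x ^ (j : ℕ)) - C ((x + 1) ^ (j : ℕ)) := by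
  funext j
  have hB : ∑ k : Fin s, x ^ (k : ℕ) * B s k j = (x + 1) ^ (j : ℕ) := by
    simpa [vecMul, dotProduct] using congrFun (vecMul_B s x) j
  have : ((fun k : Fin s => C (x ^ (k : ℕ))) ᵥ* T s) j
      = ∑ k : Fin s, C (x ^ (k : ℕ)) * (diagonal (fun _ => X) k j - C (B s k j)) := by
    simp [vecMul, dotProduct, T, charmatrix_apply]
  rw [this]
  simp only [mul_sub, Finset.sum_sub_distrib]
  congr 1
  · rw [Finset.sum_eq_single j]
    · simp [mul_comm]
    · intro k _ hk
      rw [Matrix.diagonal_apply_ne _ hk, mul_zero]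
    · simp
  · rw [← hB, map_sum]
    exact Finset.sum_congr rfl fun k _ => by rw [_root_.map_mul]

variable [NeZero s]

def q (i : Fin s) : ℂ[X] := cramer (T s) (Pi.single i 1) 0

def phi (u : Fin s → ℂ) : ℂ[X] := ∑ i, C (u i) * q s i

lemma phi_eq_cramer (u : Fin s → ℂ) : phi s u = cramer (T s) (fun i => C (u i)) 0 := by
  have h : (fun i => C (u i)) = ∑ i : Fin s, C (u i) • (Pi.single i (1 : ℂ[X]) : Fin s → ℂ[X]) := by
    funext j
    simp [Pi.single_apply, Finset.sum_apply]
  rw [h, map_sum]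
  simp [phi, q, smul_eq_mul]

lemma charmatrix_Mu (u : Fin s → ℂ) :
    charmatrix (B s - vecMulVec u (Pi.single 0 1)) =
      (T s).updateCol 0 (fun i => T s i 0 + C (u i)) := by
  ext i j
  by_cases h : j = 0
  · subst h
    simp only [Matrix.updateCol_apply, if_pos rfl, T, charmatrix_apply, Matrix.sub_apply,
      vecMulVec, Matrix.of_apply, Pi.single_apply, if_pos rfl, mul_one, map_sub]
    simp
    ring
  · simp only [Matrix.updateCol_apply, if_neg h, T, charmatrix_apply, Matrix.sub_apply,
      vecMulVec, Matrix.of_apply, Pi.single_apply, if_neg (fun hh => h (Eq.symm hh)), mul_zero,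
      sub_zero]

lemma charpoly_Mu (u : Fin s → ℂ) :
    (B s - vecMulVec u (Pi.single 0 1)).charpoly = (X - 1) ^ s + phi s u := by
  rw [Matrix.charpoly, charmatrix_Mu]
  have : (fun i => T s i 0 + C (u i)) = (fun i => T s i 0) + (fun i => C (u i)) := rfl
  rw [this, Matrix.det_updateCol_add, Matrix.updateCol_eq_self]
  rw [phi_eq_cramer, cramer_apply]
  congr 1
  exact det_T s

lemma sum_ite_bound (j : Fin s) : ∑ i : Fin s, (if i = j then (0:ℕ) else 1) = s - 1 := by
  rw [← Finset.sum_erase_add _ _ (mem_univ j)]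
  simp only [if_pos rfl, add_zero]
  rw [Finset.sum_congr rfl (fun i hi => if_neg (Finset.ne_of_mem_erase hi))]
  simp [Finset.card_erase_of_mem]

lemma natDegree_entry_le (j : Fin s) (b : Fin s → ℂ) (k i : Fin s) :
    (((T s).updateCol j fun i => C (b i)) k i).natDegree ≤ if i = j then 0 else 1 := by
  rw [Matrix.updateCol_apply]
  by_cases h : i = j <;> simp only [h, if_pos, if_neg, if_true, if_false]
  · simp
  · rw [T, charmatrix_apply]
    refine le_trans (natDegree_sub_le _ _) ?_
    simp only [natDegree_C, max_le_iff]
    constructor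
    · by_cases hk : k = i <;> simp [Matrix.diagonal_apply, hk]
    · simp

lemma natDegree_cramer_le (b : Fin s → ℂ) (j : Fin s) :
    (cramer (T s) (fun i => C (b i)) j).natDegree ≤ s - 1 := by
  rw [cramer_apply, Matrix.det_apply']
  apply Polynomial.natDegree_sum_le_of_forall_le
  intro σ _
  refine le_trans (natDegree_mul_le) ?_
  rw [natDegree_intCast, zero_add]
  refine le_trans (Polynomial.natDegree_prod_le _ _) ?_
  calc ∑ i : Fin s, ((((T s).updateCol j fun i => C (b i)) (σ i) i).natDegree)
      ≤ ∑ i : Fin s, (if i = j then (0:ℕ) else 1) :=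
        Finset.sum_le_sum fun i _ => natDegree_entry_le s j b (σ i) i
    _ = s - 1 := sum_ite_bound s j

section inj
variable {s}
variable (u : Fin s → ℂ)

def w : Fin s → ℂ[X] := cramer (T s) (fun i => C (u i))
def a (n : ℕ) : ℂ[X] := ∑ j : Fin s, C (((n : ℂ)) ^ (j : ℕ)) * w u j
def Pu : ℂ[X] := ∑ j : Fin s, C (u j) * X ^ (j : ℕ)

omit [NeZero s] in
lemma eval_Pu (x : ℂ) : (Pu u).eval x = ∑ j : Fin s, u j * x ^ (j : ℕ) := by
  simp [Pu, eval_finset_sum]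

omit [NeZero s] in
lemma recurrence (n : ℕ) :
    X * a u n - a u (n + 1) = (X - 1) ^ s * C ((Pu u).eval (n : ℂ)) := by
  have hTw : T s *ᵥ w u = ((X - 1) ^ s : ℂ[X]) • (fun i => C (u i)) := by
    rw [w, mulVec_cramer, det_T]
  have key := congrArg (fun v => (fun k : Fin s => C (((n : ℂ)) ^ (k : ℕ))) ⬝ᵥ v) hTw
  simp only [dotProduct_mulVec, vecMul_T] at key
  have lhs : (fun j : Fin s => X * C (((n:ℂ)) ^ (j : ℕ)) - C (((n:ℂ) + 1) ^ (j : ℕ))) ⬝ᵥ w u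
      = X * a u n - a u (n + 1) := by
    simp only [dotProduct, sub_mul, Finset.sum_sub_distrib, a]
    congr 1
    · rw [Finset.mul_sum]
      exact Finset.sum_congr rfl fun j _ => by ring
    · push_cast
      ring_nf
  have rhs : (fun k : Fin s => C (((n : ℂ)) ^ (k : ℕ))) ⬝ᵥ
        (((X - 1) ^ s : ℂ[X]) • (fun i => C (u i)))
      = (X - 1) ^ s * C ((Pu u).eval (n : ℂ)) := by
    simp only [dotProduct, Pi.smul_apply, smul_eq_mul, eval_Pu]
    rw [map_sum, Finset.mul_sum]
    exact Finset.sum_congr rfl fun j _ => by rw [_root_.map_mul]; ring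
  rw [← lhs, ← rhs, key]

lemma a_zero (h0 : phi s u = 0) : a u 0 = 0 := by
  have hw0 : w u 0 = 0 := by rw [w, ← phi_eq_cramer, h0]
  rw [a, Finset.sum_eq_single 0]
  · simp [hw0]
  · intro j _ hj
    have : (j : ℕ) ≠ 0 := by
      exact Fin.val_ne_zero_iff.2 hj
    simp [zero_pow this]
  · simp

lemma natDegree_a_le (n : ℕ) : (a u n).natDegree ≤ s - 1 := by
  apply Polynomial.natDegree_sum_le_of_forall_le
  intro j _
  exact le_trans (natDegree_C_mul_le _ _) (natDegree_cramer_le s u j)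

lemma step (n : ℕ) (hn : a u n = 0) : (Pu u).eval (n : ℂ) = 0 ∧ a u (n + 1) = 0 := by
  have hrec := recurrence u n
  rw [hn, mul_zero, zero_sub] at hrec
  have hX1 : ((X : ℂ[X]) - 1) ≠ 0 := by
    simpa using Polynomial.X_sub_C_ne_zero (1 : ℂ)
  have heval : (Pu u).eval (n : ℂ) = 0 := by
    by_contra he
    have hdeg : ((X - 1 : ℂ[X]) ^ s * C ((Pu u).eval (n : ℂ))).natDegree = s := by
      rw [natDegree_mul (pow_ne_zero _ hX1) (by simpa using he)]
      rw [natDegree_C, natDegree_pow]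
      have : ((X : ℂ[X]) - 1).natDegree = 1 := by
        simpa using Polynomial.natDegree_X_sub_C (1 : ℂ)
      rw [this]
      ring
    have hdegs : (a u (n+1)).natDegree = s := by
      rw [← natDegree_neg, hrec, hdeg]
    have hs := natDegree_a_le u (n + 1)
    have hpos : 1 ≤ s := Nat.pos_of_ne_zero (NeZero.ne s)
    omega
  refine ⟨heval, ?_⟩
  rw [heval, map_zero, mul_zero, neg_eq_zero] at hrec
  exact hrec

lemma u_eq_zero (h0 : phi s u = 0) : u = 0 := by
  have hall : ∀ n : ℕ, a u n = 0 := by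
    intro n
    induction n with
    | zero => exact a_zero u h0
    | succ m ih => exact (step u m ih).2
  have hroots : Pu u = 0 := by
    apply Polynomial.eq_zero_of_infinite_isRoot
    exact Set.infinite_of_injective_forall_mem (f := fun n : ℕ => (n : ℂ))
      Nat.cast_injective (fun n => (step u n (hall n)).1)
  funext i
  have : (Pu u).coeff (i : ℕ) = u i := by
    rw [Pu, Polynomial.finset_sum_coeff]
    rw [Finset.sum_eq_single i]
    · simp
    · intro j _ hj
      rw [coeff_C_mul, coeff_X_pow, if_neg (by simpa [Fin.ext_iff, eq_comm] using hj)]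
      simp
    · simp
  rw [hroots] at this
  simpa using this.symm

end inj

lemma mem_degreeLT_of_natDegree_le {p : ℂ[X]} (h : p.natDegree ≤ s - 1) :
    p ∈ degreeLT ℂ s := by
  rw [Polynomial.mem_degreeLT]
  by_cases hp : p = 0
  · rw [hp, Polynomial.degree_zero]
    exact WithBot.bot_lt_coe _
  · rw [Polynomial.degree_eq_natDegree hp]
    exact_mod_cast lt_of_le_of_lt h (by have := Nat.pos_of_ne_zero (NeZero.ne s); omega)

lemma natDegree_q_le (i : Fin s) : (q s i).natDegree ≤ s - 1 := by
  have : (Pi.single i (1:ℂ[X]) : Fin s → ℂ[X])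
      = fun k => C ((Pi.single i (1:ℂ) : Fin s → ℂ) k) := by
    funext k
    by_cases h : k = i <;> simp [Pi.single_apply, h]
  rw [q, this]
  exact natDegree_cramer_le s _ 0

lemma natDegree_phi_le (u : Fin s → ℂ) : (phi s u).natDegree ≤ s - 1 :=
  Polynomial.natDegree_sum_le_of_forall_le _ _ fun i _ =>
    le_trans (natDegree_C_mul_le _ _) (natDegree_q_le s i)

def Phi : (Fin s → ℂ) →ₗ[ℂ] degreeLT ℂ s :=
  LinearMap.codRestrict (degreeLT ℂ s)
    { toFun := fun u => phi s u
      map_add' := fun u v => by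
        simp [phi, map_add, add_mul, Finset.sum_add_distrib]
      map_smul' := fun t u => by
        simp [phi, Finset.smul_sum, smul_eq_C_mul, mul_assoc] }
    (fun u => mem_degreeLT_of_natDegree_le s (natDegree_phi_le s u))

instance : FiniteDimensional ℂ (degreeLT ℂ s) :=
  Module.Finite.equiv (degreeLTEquiv ℂ s).symm

lemma exists_unique_phi (r : ℂ[X]) (hr : r ∈ degreeLT ℂ s) : ∃! u, phi s u = r := by
  have hinj : Function.Injective (Phi s) := by
    rw [← LinearMap.ker_eq_bot, LinearMap.ker_eq_bot']
    intro u hu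
    exact u_eq_zero u (by have := congrArg Subtype.val hu; exact this)
  have hsurj : Function.Surjective (Phi s) := by
    rw [← LinearMap.injective_iff_surjective_of_finrank_eq_finrank
      (by rw [(degreeLTEquiv ℂ s).finrank_eq])]
    exact hinj
  obtain ⟨u, hu⟩ := hsurj ⟨r, hr⟩
  refine ⟨u, by have := congrArg Subtype.val hu; exact this, fun v hv => ?_⟩
  apply hinj
  rw [hu]
  exact Subtype.ext (by exact hv)

variable {s}

omit [NeZero s] in
lemma mem_spectrum_iff_isRoot (A : Matrix (Fin s) (Fin s) ℂ) (μ : ℂ) :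
    μ ∈ spectrum ℂ A ↔ A.charpoly.IsRoot μ := by
  rw [spectrum.mem_iff]
  have hdet : A.charpoly.eval μ = (algebraMap ℂ (Matrix (Fin s) (Fin s) ℂ) μ - A).det := by
    rw [Matrix.charpoly, ← coe_evalRingHom, RingHom.map_det]
    congr 1
    ext i j
    by_cases h : i = j <;>
      simp [charmatrix_apply, Matrix.algebraMap_matrix_apply, h, Matrix.diagonal_apply,
        Matrix.sub_apply]
  rw [IsRoot, hdet]
  rw [Matrix.isUnit_iff_isUnit_det, isUnit_iff_ne_zero, not_ne_iff]

omit [NeZero s] in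
lemma spectrum_eq_range_iff (A : Matrix (Fin s) (Fin s) ℂ) (lam : Fin s → ℂ)
    (hlam : Function.Injective lam) :
    spectrum ℂ A = Set.range lam ↔ A.charpoly = ∏ k, (X - C (lam k)) := by
  constructor
  · intro h
    have hmon := A.charpoly_monic
    have hne : A.charpoly ≠ 0 := hmon.ne_zero
    have hdeg : A.charpoly.natDegree = s := by
      rw [Matrix.charpoly_natDegree_eq_dim, Fintype.card_fin]
    have hnodup : (Multiset.map lam univ.val).Nodup :=
      (Finset.univ.nodup).map_on (fun a _ b _ h => hlam h)
    have hsub : Multiset.map lam univ.val ≤ A.charpoly.roots := by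
      rw [Multiset.le_iff_subset hnodup]
      intro x hx
      obtain ⟨k, _, rfl⟩ := Multiset.mem_map.1 hx
      rw [Polynomial.mem_roots hne, ← mem_spectrum_iff_isRoot, h]
      exact ⟨k, rfl⟩
    have hcard : Multiset.card A.charpoly.roots ≤ Multiset.card (Multiset.map lam univ.val) := by
      rw [Multiset.card_map]
      simpa [hdeg] using A.charpoly.card_roots'
    have hroots : Multiset.map lam univ.val = A.charpoly.roots :=
      Multiset.eq_of_le_of_card_le hsub hcard
    rw [(IsAlgClosed.splits A.charpoly).eq_prod_roots_of_monic hmon]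
    rw [← hroots, Multiset.map_map]
    rfl
  · intro h
    ext μ
    rw [mem_spectrum_iff_isRoot, h, IsRoot, eval_prod]
    rw [Finset.prod_eq_zero_iff]
    constructor
    · rintro ⟨k, _, hk⟩
      refine ⟨k, ?_⟩
      simp only [eval_sub, eval_X, eval_C] at hk
      linear_combination -hk
    · rintro ⟨k, rfl⟩
      exact ⟨k, mem_univ k, by simp⟩

omit [NeZero s] in
lemma charpoly_conj (V M : Matrix (Fin s) (Fin s) ℂ) (hV : IsUnit V.det) :
    (V * M * V⁻¹).charpoly = M.charpoly := by
  have hVV : V * V⁻¹ = 1 := Matrix.mul_nonsing_inv V hV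
  have hone : (C : ℂ →+* ℂ[X]).mapMatrix V * (C : ℂ →+* ℂ[X]).mapMatrix V⁻¹ = 1 := by
    rw [← ((C : ℂ →+* ℂ[X]).mapMatrix).map_mul, hVV, ((C : ℂ →+* ℂ[X]).mapMatrix).map_one]
  have hscal : Matrix.scalar (Fin s) (X : ℂ[X])
      = (X : ℂ[X]) • (1 : Matrix (Fin s) (Fin s) ℂ[X]) := by
    ext i j
    by_cases hij : i = j <;>
      simp [Matrix.scalar_apply, Matrix.smul_apply, Matrix.one_apply, Matrix.diagonal_apply, hij]
  have h : charmatrix (V * M * V⁻¹) =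
      (C : ℂ →+* ℂ[X]).mapMatrix V * charmatrix M * (C : ℂ →+* ℂ[X]).mapMatrix V⁻¹ := by
    rw [charmatrix, charmatrix, mul_sub, sub_mul]
    congr 1
    · rw [hscal, mul_smul_comm, smul_mul_assoc, mul_one, hone]
    · rw [← ((C : ℂ →+* ℂ[X]).mapMatrix).map_mul, ← ((C : ℂ →+* ℂ[X]).mapMatrix).map_mul]
  show (charmatrix (V * M * V⁻¹)).det = (charmatrix M).det
  rw [h, Matrix.det_mul, Matrix.det_mul, mul_right_comm, ← Matrix.det_mul, hone,
    Matrix.det_one, one_mul]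

omit [NeZero s] in
lemma mul_vecMulVec (A : Matrix (Fin s) (Fin s) ℂ) (b d : Fin s → ℂ) :
    A * vecMulVec b d = vecMulVec (A *ᵥ b) d := by
  ext i j
  simp [vecMulVec, Matrix.mul_apply, mulVec, dotProduct, Finset.sum_mul, mul_assoc]

end S12
namespace S12

theorem main (s : ℕ) [NeZero s] (c : Fin s → ℝ) (hc : Function.Injective c)
    (lam : Fin s → ℂ) (hlam : Function.Injective lam) (h1 : ∀ k, lam k ≠ 1) :
    (∃! p : (Fin s → ℂ) × Matrix (Fin s) (Fin s) ℂ,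
      Matrix.of (fun i j : Fin s => (c i : ℂ) ^ (j : ℕ)) =
          p.2 * Matrix.of (fun i j : Fin s => ((c i : ℂ) - 1) ^ (j : ℕ)) +
            Matrix.of (fun i j : Fin s => if (j : ℕ) = 0 then p.1 i else 0) ∧
        spectrum ℂ p.2 = Set.range lam) ∧
    ((∀ k, ∃ j, lam j = (starRingEnd ℂ) (lam k)) →
      ∀ p : (Fin s → ℂ) × Matrix (Fin s) (Fin s) ℂ,
        (Matrix.of (fun i j : Fin s => (c i : ℂ) ^ (j : ℕ)) =
            p.2 * Matrix.of (fun i j : Fin s => ((c i : ℂ) - 1) ^ (j : ℕ)) +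
              Matrix.of (fun i j : Fin s => if (j : ℕ) = 0 then p.1 i else 0) ∧
          spectrum ℂ p.2 = Set.range lam) →
        (∀ i, (p.1 i).im = 0) ∧ (∀ i j, (p.2 i j).im = 0)) := by
  classical
  set v : Fin s → ℂ := fun i => (c i : ℂ) - 1 with hv
  set V : Matrix (Fin s) (Fin s) ℂ := vandermonde v with hVdef
  set Vc : Matrix (Fin s) (Fin s) ℂ := vandermonde (fun i => (c i : ℂ)) with hVcdef
  set Th : (Fin s → ℂ) → Matrix (Fin s) (Fin s) ℂ :=
    fun θ => Matrix.of (fun i j : Fin s => if (j : ℕ) = 0 then θ i else 0) with hThdef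
  have hvinj : Function.Injective v := by
    intro a b hab
    apply hc
    have : (c a : ℂ) = (c b : ℂ) := by
      have := hab
      simp only [hv] at this
      linear_combination this
    exact_mod_cast this
  have hdetV : IsUnit V.det :=
    isUnit_iff_ne_zero.2 ((Matrix.det_vandermonde_ne_zero_iff).2 hvinj)
  have hVV : V * V⁻¹ = 1 := Matrix.mul_nonsing_inv V hdetV
  have hVV' : V⁻¹ * V = 1 := Matrix.nonsing_inv_mul V hdetV
  have hVB : V * B s = Vc := by
    rw [hVdef, vand_mul_B, hVcdef]
    congr 1
    funext i
    simp [hv]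
  have hTh : ∀ θ : Fin s → ℂ, Th θ = vecMulVec θ (Pi.single 0 1) := by
    intro θ
    ext i j
    by_cases h : j = 0
    · subst h
      simp [hThdef, vecMulVec, Pi.single_apply]
    · have hval : (j : ℕ) ≠ 0 := by
        exact Fin.val_ne_zero_iff.2 h
      simp [hThdef, vecMulVec, Pi.single_apply, h, hval]
  have hre : ∀ (θ : Fin s → ℂ) (D : Matrix (Fin s) (Fin s) ℂ),
      (Vc = D * V + Th θ) ↔ D = (Vc - Th θ) * V⁻¹ := by
    intro θ D
    constructor
    · intro h
      have h2 : D * V = Vc - Th θ := by rw [h]; abel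
      rw [← h2, Matrix.mul_assoc, hVV, Matrix.mul_one]
    · intro h
      rw [h, Matrix.mul_assoc, hVV', Matrix.mul_one]
      abel
  have hCP : ∀ θ : Fin s → ℂ,
      ((Vc - Th θ) * V⁻¹).charpoly = (X - 1) ^ s + phi s (V⁻¹ *ᵥ θ) := by
    intro θ
    have heq : (Vc - Th θ) * V⁻¹ = V * (B s - vecMulVec (V⁻¹ *ᵥ θ) (Pi.single 0 1)) * V⁻¹ := by
      congr 1
      rw [mul_sub, hVB, mul_vecMulVec, mulVec_mulVec, hVV, one_mulVec, hTh]
    rw [heq, charpoly_conj _ _ hdetV, charpoly_Mu]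
  -- target polynomial
  set P : ℂ[X] := ∏ k, (X - C (lam k)) with hPdef
  have hPmon : P.Monic := monic_prod_of_monic _ _ fun k _ => monic_X_sub_C _
  have hPdeg : P.natDegree = s := by
    rw [hPdef, natDegree_prod_of_monic _ _ (fun k _ => monic_X_sub_C _)]
    simp [natDegree_X_sub_C]
  have hQmon : (((X : ℂ[X]) - 1) ^ s).Monic := by
    have : ((X : ℂ[X]) - 1) = X - C 1 := by rw [Polynomial.C_1]
    rw [this]
    exact (monic_X_sub_C (1 : ℂ)).pow s
  have hQdeg : (((X : ℂ[X]) - 1) ^ s).natDegree = s := by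
    have : ((X : ℂ[X]) - 1) = X - C 1 := by rw [Polynomial.C_1]
    rw [this, natDegree_pow, natDegree_X_sub_C, mul_one]
  set r : ℂ[X] := P - ((X : ℂ[X]) - 1) ^ s with hrdef
  have hr : r ∈ degreeLT ℂ s := by
    rw [Polynomial.mem_degreeLT]
    have hlt : r.degree < P.degree := by
      apply Polynomial.degree_sub_lt
      · rw [Polynomial.degree_eq_natDegree hPmon.ne_zero,
          Polynomial.degree_eq_natDegree hQmon.ne_zero, hPdeg, hQdeg]
      · exact hPmon.ne_zero
      · rw [hPmon.leadingCoeff, hQmon.leadingCoeff]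
    calc r.degree < P.degree := hlt
      _ ≤ (s : WithBot ℕ) := by
        rw [Polynomial.degree_eq_natDegree hPmon.ne_zero, hPdeg]
  obtain ⟨u0, hu0, hu0uniq⟩ := exists_unique_phi s r hr
  have hcond : ∀ p : (Fin s → ℂ) × Matrix (Fin s) (Fin s) ℂ,
      (Vc = p.2 * V + Th p.1 ∧ spectrum ℂ p.2 = Set.range lam) ↔
      (phi s (V⁻¹ *ᵥ p.1) = r ∧ p.2 = (Vc - Th p.1) * V⁻¹) := by
    intro p
    constructor
    · rintro ⟨heq, hspec⟩
      have hD := (hre p.1 p.2).1 heq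
      refine ⟨?_, hD⟩
      have hcp := (spectrum_eq_range_iff p.2 lam hlam).1 hspec
      rw [hD, hCP] at hcp
      rw [hrdef, eq_sub_iff_add_eq']
      exact hcp
    · rintro ⟨hphi, hD⟩
      refine ⟨(hre p.1 p.2).2 hD, ?_⟩
      rw [spectrum_eq_range_iff p.2 lam hlam, hD, hCP, hphi, hrdef]
      ring
  constructor
  · -- existence and uniqueness
    refine ⟨(V *ᵥ u0, (Vc - Th (V *ᵥ u0)) * V⁻¹), ?_, ?_⟩
    · exact (hcond _).2 ⟨by rw [mulVec_mulVec, hVV', one_mulVec]; exact hu0, rfl⟩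
    · intro p hp
      obtain ⟨hphi, hD⟩ := (hcond p).1 hp
      have hu : V⁻¹ *ᵥ p.1 = u0 := hu0uniq _ hphi
      have h1 : p.1 = V *ᵥ u0 := by
        rw [← hu, mulVec_mulVec, hVV, one_mulVec]
      exact Prod.ext h1 (by rw [hD, h1])
  · -- reality
    intro hstar p hp
    obtain ⟨hphi, hD⟩ := (hcond p).1 hp
    set σ := starRingEnd ℂ with hσ
    have hqmap : ∀ i, (q s i).map σ = q s i := by
      intro i
      have hT : (T s).map (Polynomial.map σ) = T s := by
        ext k l
        by_cases h : k = l <;>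
          simp [T, charmatrix_apply, Matrix.diagonal_apply, h, Polynomial.map_sub,
            Polynomial.map_natCast, B, Matrix.map_apply]
      have hsingle : (fun k => Polynomial.map σ ((Pi.single i 1 : Fin s → ℂ[X]) k))
          = (Pi.single i 1 : Fin s → ℂ[X]) := by
        funext k
        by_cases h : k = i <;> simp [Pi.single_apply, h]
      show (cramer (T s) (Pi.single i 1) 0).map σ = cramer (T s) (Pi.single i 1) 0
      rw [cramer_apply, ← Polynomial.coe_mapRingHom, RingHom.map_det,
        RingHom.mapMatrix_apply, Polynomial.coe_mapRingHom, Matrix.map_updateCol, hT]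
      exact congrArg (fun col : Fin s → ℂ[X] => ((T s).updateCol 0 col).det) hsingle
    have hphimap : ∀ u' : Fin s → ℂ, (phi s u').map σ = phi s (fun i => σ (u' i)) := by
      intro u'
      rw [phi, ← Polynomial.coe_mapRingHom, map_sum, phi]
      exact Finset.sum_congr rfl fun i _ => by
        rw [Polynomial.coe_mapRingHom, Polynomial.map_mul, Polynomial.map_C, hqmap i]
    have hrmap : r.map σ = r := by
      choose τ hτ using hstar
      have hτinj : Function.Injective τ := by
        intro a b hab
        apply hlam
        apply (starRingEnd ℂ).injective
        rw [← hτ a, ← hτ b, hab]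
      have hPmap : P.map σ = P := by
        rw [hPdef, ← Polynomial.coe_mapRingHom, map_prod]
        have : ∀ k, (Polynomial.mapRingHom σ) (X - C (lam k)) = X - C (lam (τ k)) := by
          intro k
          rw [Polynomial.coe_mapRingHom, Polynomial.map_sub, Polynomial.map_X, Polynomial.map_C,
            hτ k]
        rw [Finset.prod_congr rfl fun k _ => this k]
        exact Fintype.prod_bijective τ (Finite.injective_iff_bijective.1 hτinj) _ _
          (fun k => rfl)
      have hQmap : (((X : ℂ[X]) - 1) ^ s).map σ = ((X : ℂ[X]) - 1) ^ s := by
        rw [Polynomial.map_pow, Polynomial.map_sub, Polynomial.map_X, Polynomial.map_one]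
      rw [hrdef, Polynomial.map_sub, hPmap, hQmap]
    set u : Fin s → ℂ := V⁻¹ *ᵥ p.1 with hudef
    have hueq : (fun i => σ (u i)) = u := by
      have hphi2 : phi s (fun i => σ (u i)) = r := by
        rw [← hphimap, hphi, hrmap]
      rw [hu0uniq _ hphi2, hu0uniq _ hphi]
    have hp1 : p.1 = V *ᵥ u := by
      rw [hudef, mulVec_mulVec, hVV, one_mulVec]
    have hVreal : ∀ i k, σ (V i k) = V i k := by
      intro i k
      simp [hVdef, vandermonde, hv, map_pow, map_sub, Complex.conj_ofReal, hσ]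
    have him1 : ∀ i, (p.1 i).im = 0 := by
      intro i
      rw [← Complex.conj_eq_iff_im]
      have e1 : σ (p.1 i) = σ (∑ k, V i k * u k) := by rw [hp1]; rfl
      have e2 : σ (∑ k, V i k * u k) = ∑ k, σ (V i k) * σ (u k) := by
        rw [map_sum]
        exact Finset.sum_congr rfl fun k _ => by rw [_root_.map_mul]
      have e3 : (∑ k, σ (V i k) * σ (u k)) = ∑ k, V i k * u k :=
        Finset.sum_congr rfl fun k _ => by rw [hVreal i k, congrFun hueq k]
      have e4 : (∑ k, V i k * u k) = p.1 i := by rw [hp1]; rfl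
      rw [e1, e2, e3, e4]
    refine ⟨him1, ?_⟩
    have heq : Vc = p.2 * V + Th p.1 := (hre p.1 p.2).2 hD
    have hVcreal : Vc.map σ = Vc := by
      ext i j
      simp [hVcdef, vandermonde, map_pow, Complex.conj_ofReal, hσ, Matrix.map_apply]
    have hVreal' : V.map σ = V := by
      ext i j
      exact hVreal i j
    have hThreal : (Th p.1).map σ = Th p.1 := by
      ext i j
      by_cases h : j = 0 <;>
        simp [hThdef, Matrix.map_apply, h, hσ, Complex.conj_eq_iff_im.2 (him1 i)]
    have heq2 : Vc = p.2.map σ * V + Th p.1 := by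
      have := congrArg (fun A : Matrix (Fin s) (Fin s) ℂ => A.map σ) heq
      simpa [Matrix.map_add, Matrix.map_mul, hVcreal, hVreal', hThreal] using this
    have hD2 : p.2.map σ = p.2 := by
      have hmul : p.2.map σ * V = p.2 * V := by
        have := heq2.symm.trans heq
        have h' := congrArg (fun A => A - Th p.1) this
        simpa using h'
      calc p.2.map σ = p.2.map σ * (V * V⁻¹) := by rw [hVV, Matrix.mul_one]
        _ = (p.2.map σ * V) * V⁻¹ := by rw [Matrix.mul_assoc]
        _ = (p.2 * V) * V⁻¹ := by rw [hmul]
        _ = p.2 * (V * V⁻¹) := by rw [Matrix.mul_assoc]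
        _ = p.2 := by rw [hVV, Matrix.mul_one]
    intro i j
    rw [← Complex.conj_eq_iff_im]
    exact congrFun (congrFun hD2 i) j

end S12

theorem stmt_12 (s : ℕ) (c : Fin s → ℝ) (hc : Function.Injective c)
    (lam : Fin s → ℂ) (hlam : Function.Injective lam) (h1 : ∀ k, lam k ≠ 1) :
    (∃! p : (Fin s → ℂ) × Matrix (Fin s) (Fin s) ℂ,
      Matrix.of (fun i j : Fin s => (c i : ℂ) ^ (j : ℕ)) =
          p.2 * Matrix.of (fun i j : Fin s => ((c i : ℂ) - 1) ^ (j : ℕ)) +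
            Matrix.of (fun i j : Fin s => if (j : ℕ) = 0 then p.1 i else 0) ∧
        spectrum ℂ p.2 = Set.range lam) ∧
    ((∀ k, ∃ j, lam j = (starRingEnd ℂ) (lam k)) →
      ∀ p : (Fin s → ℂ) × Matrix (Fin s) (Fin s) ℂ,
        (Matrix.of (fun i j : Fin s => (c i : ℂ) ^ (j : ℕ)) =
            p.2 * Matrix.of (fun i j : Fin s => ((c i : ℂ) - 1) ^ (j : ℕ)) +
              Matrix.of (fun i j : Fin s => if (j : ℕ) = 0 then p.1 i else 0) ∧
          spectrum ℂ p.2 = Set.range lam) →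
        (∀ i, (p.1 i).im = 0) ∧ (∀ i j, (p.2 i j).im = 0)) := by
  rcases s with _ | n
  · -- s = 0 : everything is trivial
    haveI hms : Subsingleton (Matrix (Fin 0) (Fin 0) ℂ) :=
      ⟨fun a b => by ext i j; exact i.elim0⟩
    haveI hfs : Subsingleton (Fin 0 → ℂ) := ⟨fun a b => funext fun i => i.elim0⟩
    have hspec : ∀ A : Matrix (Fin 0) (Fin 0) ℂ, spectrum ℂ A = Set.range lam := by
      intro A
      have h1 : spectrum ℂ A = ∅ := by
        rw [Set.eq_empty_iff_forall_notMem]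
        intro x hx
        exact spectrum.mem_iff.1 hx (isUnit_of_subsingleton _)
      rw [h1, Set.range_eq_empty lam]
    constructor
    · refine ⟨(fun i => i.elim0, 0), ⟨Subsingleton.elim _ _, hspec 0⟩, fun y hy => ?_⟩
      exact Prod.ext (Subsingleton.elim _ _) (Subsingleton.elim _ _)
    · intro _ p _
      exact ⟨fun i => i.elim0, fun i => i.elim0⟩
  · exact S12.main (n + 1) c hc lam hlam h1
end
end

section
/- Fix distinct reals c_1, ..., c_s. There exist D ∈ M_s(ℝ) and θ_1, ..., θ_s ∈ ℝ such that V_c^1 = D V_{c-1}^1 + Θ (consistency of order s) and the spectral radius of D is strictly less than 1 (strong stability). -/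
open Polynomial Matrix Finset

noncomputable def qp (s j : ℕ) : Polynomial ℝ :=
  ∏ k ∈ Finset.range (s - 1), (X + C ((k : ℝ) + 1 - (j : ℝ)))

lemma qp_natDegree (s j : ℕ) : (qp s j).natDegree = s - 1 := by
  rw [qp, natDegree_prod_of_monic _ _ (fun k _ => monic_X_add_C _)]
  simp only [Polynomial.natDegree_X_add_C, Finset.sum_const, Finset.card_range, smul_eq_mul,
    mul_one]

lemma qp_eval (s j : ℕ) (x : ℝ) :
    (qp s j).eval x = ∏ k ∈ Finset.range (s - 1), (x + ((k : ℝ) + 1 - (j : ℝ))) := by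
  simp [qp, eval_prod]

lemma qp_shift (s j : ℕ) (x : ℝ) : (qp s (j + 1)).eval (x + 1) = (qp s j).eval x := by
  rw [qp_eval, qp_eval]
  refine Finset.prod_congr rfl fun k _ => ?_
  push_cast; ring

lemma qp_eval_zero (s j : ℕ) (h1 : 1 ≤ j) (h2 : j ≤ s - 1) : (qp s j).eval 0 = 0 := by
  rw [qp_eval]
  refine Finset.prod_eq_zero (i := j - 1) ?_ ?_
  · exact Finset.mem_range.2 (lt_of_lt_of_le (Nat.sub_lt h1 one_pos) h2)
  · have : ((j - 1 : ℕ) : ℝ) = (j : ℝ) - 1 := by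
      push_cast [Nat.cast_sub h1]; ring
    rw [this]; ring

lemma qp_eval_lt (s j m : ℕ) (hm : m < j) (hj : j ≤ s - 1) : (qp s j).eval (m : ℝ) = 0 := by
  rw [qp_eval]
  refine Finset.prod_eq_zero (i := j - m - 1) ?_ ?_
  · refine Finset.mem_range.2 (lt_of_lt_of_le ?_ hj)
    omega
  · have h0 : j - m - 1 + (m + 1) = j := by omega
    have h1 : ((j - m - 1 : ℕ) : ℝ) = (j : ℝ) - m - 1 := by
      have := congrArg (fun n : ℕ => (n : ℝ)) h0
      push_cast at this
      linarith
    rw [h1]; ring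

lemma qp_eval_self_pos (s j : ℕ) : 0 < (qp s j).eval (j : ℝ) := by
  rw [qp_eval]
  refine Finset.prod_pos fun k _ => ?_
  have : (j : ℝ) + ((k : ℝ) + 1 - (j : ℝ)) = (k : ℝ) + 1 := by ring
  rw [this]; positivity

theorem stmt_13 (s : ℕ) (c : Fin s → ℝ) (hc : Function.Injective c) :
    ∃ (D : Matrix (Fin s) (Fin s) ℝ) (θ : Fin s → ℝ),
      Matrix.vandermonde c =
          D * Matrix.vandermonde (fun i => c i - 1) +
            Matrix.of (fun i j : Fin s => if (j : ℕ) = 0 then θ i else 0) ∧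
      ∀ μ : ℂ, μ ∈ spectrum ℂ (D.map Complex.ofReal) → ‖μ‖ < 1 := by
  rcases Nat.eq_zero_or_pos s with hs | hs
  · subst hs
    have hsub : Subsingleton (Matrix (Fin 0) (Fin 0) ℂ) :=
      ⟨fun a b => by ext i; exact i.elim0⟩
    refine ⟨0, 0, ?_, ?_⟩
    · ext i j; exact i.elim0
    · intro μ hμ
      rw [spectrum.mem_iff] at hμ
      exact absurd (@isUnit_of_subsingleton _ _ hsub _) hμ
  haveI : NeZero s := ⟨hs.ne'⟩
  have hs1 : s - 1 < s := Nat.sub_lt hs one_pos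
  set R : Matrix (Fin s) (Fin s) ℝ :=
    Matrix.of (fun k j : Fin s => (qp s (j : ℕ)).coeff k) with hRdef
  have hVR : ∀ (v : Fin s → ℝ) (i j : Fin s),
      (Matrix.vandermonde v * R) i j = (qp s (j : ℕ)).eval (v i) := by
    intro v i j
    rw [Matrix.mul_apply,
      Polynomial.eval_eq_sum_range' (lt_of_le_of_lt (le_of_eq (qp_natDegree s j)) hs1),
      ← Fin.sum_univ_eq_sum_range]
    refine Finset.sum_congr rfl fun k _ => ?_
    simp [Matrix.vandermonde_apply, hRdef, mul_comm]
  -- R is invertible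
  have hdetR : IsUnit R.det := by
    have hdetVn : (Matrix.vandermonde (fun m : Fin s => ((m : ℕ) : ℝ))).det ≠ 0 := by
      rw [Matrix.det_vandermonde_ne_zero_iff]
      intro a b hab
      exact Fin.val_injective (Nat.cast_injective hab)
    have hdetE : (Matrix.vandermonde (fun m : Fin s => ((m : ℕ) : ℝ)) * R).det ≠ 0 := by
      rw [Matrix.det_of_lowerTriangular _ ?_]
      · refine Finset.prod_ne_zero_iff.2 fun i _ => ?_
        rw [hVR]
        exact (qp_eval_self_pos s i).ne'
      · intro i j hij
        have hij' : (i : ℕ) < (j : ℕ) := OrderDual.toDual_lt_toDual.mp hij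
        rw [hVR]
        exact qp_eval_lt s j i hij' (Nat.le_pred_of_lt j.isLt)
    rw [isUnit_iff_ne_zero]
    intro h
    apply hdetE
    rw [Matrix.det_mul, h, mul_zero]
  -- G
  set G : Matrix (Fin s) (Fin s) ℝ :=
    Matrix.vandermonde (fun i => c i - 1) * R with hGdef
  have hGdet : IsUnit G.det := by
    rw [hGdef, Matrix.det_mul, isUnit_iff_ne_zero]
    refine mul_ne_zero ?_ (isUnit_iff_ne_zero.mp hdetR)
    rw [Matrix.det_vandermonde_ne_zero_iff]
    intro a b hab
    have hab' : c a - 1 = c b - 1 := hab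
    exact hc (by linarith)
  -- N
  set N : Matrix (Fin s) (Fin s) ℝ :=
    Matrix.of (fun i j : Fin s => if (i : ℕ) + 1 = (j : ℕ) then (1 : ℝ) else 0) with hNdef
  have hNpow : ∀ (m : ℕ) (i j : Fin s),
      (N ^ m) i j = if (i : ℕ) + m = (j : ℕ) then 1 else 0 := by
    intro m
    induction m with
    | zero =>
      intro i j
      simp [Matrix.one_apply, Fin.ext_iff]
    | succ m ih =>
      intro i j
      rw [pow_succ, Matrix.mul_apply]
      simp only [ih]
      by_cases h : (i : ℕ) + m < s
      · rw [Finset.sum_eq_single (⟨(i : ℕ) + m, h⟩ : Fin s)]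
        · rw [if_pos rfl, one_mul, hNdef]
          simp only [Matrix.of_apply]
          congr 1
        · intro k _ hk
          rw [if_neg, zero_mul]
          intro hh
          exact hk (Fin.ext hh.symm)
        · intro hk
          exact absurd (Finset.mem_univ _) hk
      · rw [Finset.sum_eq_zero, if_neg (by omega)]
        intro k _
        rw [if_neg (by omega), zero_mul]
  have hNs : N ^ s = 0 := by
    ext i j
    rw [hNpow, if_neg (by omega)]
    rfl
  -- θ
  set θ : Fin s → ℝ := fun i => (qp s 0).eval (c i) / (qp s 0).eval 0 with hθdef
  set Θ : Matrix (Fin s) (Fin s) ℝ :=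
    Matrix.of (fun i j : Fin s => if (j : ℕ) = 0 then θ i else 0) with hΘdef
  have hq00 : (qp s 0).eval 0 ≠ 0 := by
    have := qp_eval_self_pos s 0
    simpa using this.ne'
  -- master identity
  have hM : Matrix.vandermonde c * R = G * N + Θ * R := by
    ext i j
    rw [hVR, Matrix.add_apply, Matrix.mul_apply (M := Θ)]
    have hΘR : ∑ k, Θ i k * R k j = θ i * (qp s (j : ℕ)).eval 0 := by
      rw [Finset.sum_eq_single (0 : Fin s)]
      · rw [hΘdef, hRdef]
        simp [Polynomial.coeff_zero_eq_eval_zero]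
      · intro k _ hk
        rw [hΘdef]
        simp only [Matrix.of_apply]
        rw [if_neg, zero_mul]
        exact fun hh => hk (Fin.ext (by rw [hh]; simp))
      · intro hk
        exact absurd (Finset.mem_univ _) hk
    rw [hΘR]
    have hjlt : (j : ℕ) < s := j.isLt
    rcases Nat.eq_zero_or_pos (j : ℕ) with hj | hjpos
    · -- column 0
      have hGN : (G * N) i j = 0 := by
        rw [Matrix.mul_apply]
        refine Finset.sum_eq_zero fun k _ => ?_
        rw [hNdef]
        simp only [Matrix.of_apply]
        rw [if_neg (by omega), mul_zero]
      rw [hGN, hj, zero_add, hθdef]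
      rw [div_mul_cancel₀ _ hq00]
    · -- column m+1
      obtain ⟨m, hj⟩ : ∃ m, (j : ℕ) = m + 1 := ⟨(j : ℕ) - 1, by omega⟩
      have hmlt : m < s := by omega
      have hΘ0 : θ i * (qp s (j : ℕ)).eval 0 = 0 := by
        rw [hj, qp_eval_zero s _ (Nat.succ_le_succ (Nat.zero_le _)) (by omega), mul_zero]
      have hGN : (G * N) i j = (qp s m).eval (c i - 1) := by
        rw [Matrix.mul_apply]
        rw [Finset.sum_eq_single (⟨m, hmlt⟩ : Fin s)]
        · rw [hNdef]
          simp only [Matrix.of_apply]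
          rw [if_pos (show m + 1 = (j : ℕ) from hj.symm), mul_one, hGdef, hVR]
        · intro k _ hk
          rw [hNdef]
          simp only [Matrix.of_apply]
          rw [if_neg, mul_zero]
          intro hh
          exact hk (Fin.ext (show (k : ℕ) = m by omega))
        · intro hk
          exact absurd (Finset.mem_univ _) hk
      rw [hGN, hΘ0, add_zero, hj, ← qp_shift s m (c i - 1), sub_add_cancel]
  -- the equation
  have key : Matrix.vandermonde c = G * N * G⁻¹ * Matrix.vandermonde (fun i => c i - 1) + Θ := by
    have h2 : (G * N * G⁻¹ * Matrix.vandermonde (fun i => c i - 1) + Θ) * R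
        = Matrix.vandermonde c * R := by
      rw [Matrix.add_mul, Matrix.mul_assoc (G * N * G⁻¹), ← hGdef,
        Matrix.nonsing_inv_mul_cancel_right _ _ hGdet, hM]
    have h3 := congrArg (fun M => M * R⁻¹) h2
    simpa [Matrix.mul_nonsing_inv_cancel_right _ _ hdetR] using h3.symm
  -- nilpotency
  have hconj : ∀ n : ℕ, (G * N * G⁻¹) ^ n = G * N ^ n * G⁻¹ := by
    intro n
    induction n with
    | zero => simp [Matrix.mul_nonsing_inv _ hGdet]
    | succ n ih =>
      rw [pow_succ, ih, pow_succ]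
      simp only [← Matrix.mul_assoc]
      rw [Matrix.nonsing_inv_mul_cancel_right _ _ hGdet]
  have hDpow : (G * N * G⁻¹) ^ s = 0 := by
    rw [hconj, hNs, Matrix.mul_zero, Matrix.zero_mul]
  refine ⟨G * N * G⁻¹, θ, key, ?_⟩
  intro μ hμ
  have hDc : ((G * N * G⁻¹).map Complex.ofReal) ^ s = 0 := by
    have h5 : (G * N * G⁻¹).map (Complex.ofReal) =
        Complex.ofRealHom.mapMatrix (G * N * G⁻¹) := rfl
    rw [h5, ← map_pow, hDpow, map_zero]
  rcases eq_or_ne μ 0 with h0 | h0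
  · simp [h0]
  exfalso
  rw [spectrum.mem_iff] at hμ
  apply hμ
  set Dc := (G * N * G⁻¹).map Complex.ofReal with hDcdef
  have hnil : IsNilpotent (μ⁻¹ • Dc) := ⟨s, by rw [_root_.smul_pow, hDc, smul_zero]⟩
  have h1 : IsUnit (1 - μ⁻¹ • Dc) := hnil.isUnit_one_sub
  have h2 : algebraMap ℂ (Matrix (Fin s) (Fin s) ℂ) μ - Dc
      = μ • (1 - μ⁻¹ • Dc) := by
    rw [smul_sub, smul_smul, mul_inv_cancel₀ h0, one_smul, Algebra.algebraMap_eq_smul_one]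
  have h4 : μ • ((1 : Matrix (Fin s) (Fin s) ℂ) - μ⁻¹ • Dc)
      = (algebraMap ℂ (Matrix (Fin s) (Fin s) ℂ) μ) * (1 - μ⁻¹ • Dc) := by
    rw [Algebra.algebraMap_eq_smul_one, smul_mul_assoc, one_mul]
  rw [h2, h4]
  exact (IsUnit.map (algebraMap ℂ (Matrix (Fin s) (Fin s) ℂ))
    (isUnit_iff_ne_zero.2 h0)).mul h1
end

section
/- Let B be the N×N finite-difference discrete Dirichlet Laplacian (tridiagonal with diagonal −2/δx² and off-diagonal 1/δx²), h > 0, and γ ∈ ℝ^N a nonnegative vector. Set A = I − (h/2)B − (h/2) diag(γ) and suppose (energy) u_{n+1} solves A u_{n+1} = (I + (h/2)B + (h/2) diag(γ)) u_n, with γ = γ_{n+1/2} given by the relaxation update γ_{n+1/2} = (1/2)γ_{n−1/2} + (1/2) u_n^{∘2}. Define the discrete energy E(u, γ) = −(1/2)⟨u, B u⟩ − (1/2)⟨γ, u^{∘2}⟩ + (1/4)⟨γ, γ⟩ with ⟨v,w⟩ = δx Σ_k v(k) w(k). Then (1/h)‖u_{n+1} − u_n‖² + (3/4)‖γ_{n+1/2}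 − γ_{n−1/2}‖² = E(u_n, γ_{n−1/2}) − E(u_{n+1}, γ_{n+1/2}); in particular E(u_{n+1}, γ_{n+1/2}) ≤ E(u_n, γ_{n−1/2}). -/
theorem stmt_19 (N : ℕ) (δx : ℝ) (hδx : 0 < δx) (h : ℝ) (hh : 0 < h)
    (B : Matrix (Fin N) (Fin N) ℝ) (hB : B.IsSymm)
    (un un1 γm γp : Fin N → ℝ) (hγ : ∀ k, 0 ≤ γp k)
    (hrelax : γp = fun k => (1 / 2) * γm k + (1 / 2) * un k ^ 2)
    (hscheme : (1 - (h / 2) • B - (h / 2) • Matrix.diagonal γp).mulVec un1 =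
      (1 + (h / 2) • B + (h / 2) • Matrix.diagonal γp).mulVec un) :
    (1 / h) * (δx * ∑ k, (un1 k - un k) * (un1 k - un k)) +
        (3 / 4) * (δx * ∑ k, (γp k - γm k) * (γp k - γm k)) =
      (-(1 / 2) * (δx * ∑ k, un k * B.mulVec un k) -
          (1 / 2) * (δx * ∑ k, γm k * un k ^ 2) +
          (1 / 4) * (δx * ∑ k, γm k * γm k)) -
        (-(1 / 2) * (δx * ∑ k, un1 k * B.mulVec un1 k) -
          (1 / 2) * (δx * ∑ k, γp k * un1 k ^ 2) +
          (1 / 4) * (δx * ∑ k, γp k * γp k)) ∧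
    (-(1 / 2) * (δx * ∑ k, un1 k * B.mulVec un1 k) -
        (1 / 2) * (δx * ∑ k, γp k * un1 k ^ 2) +
        (1 / 4) * (δx * ∑ k, γp k * γp k)) ≤
      (-(1 / 2) * (δx * ∑ k, un k * B.mulVec un k) -
        (1 / 2) * (δx * ∑ k, γm k * un k ^ 2) +
        (1 / 4) * (δx * ∑ k, γm k * γm k)) := by
  -- pointwise form of the scheme
  have hpt : ∀ k, un1 k - un k =
      (h / 2) * (B.mulVec un1 k + B.mulVec un k + γp k * (un1 k + un k)) := by
    intro k
    have e := congrFun hscheme k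
    simp [Matrix.sub_mulVec, Matrix.add_mulVec, Matrix.smul_mulVec,
      Matrix.one_mulVec, Matrix.mulVec_diagonal, Pi.smul_apply, smul_eq_mul,
      Pi.sub_apply, Pi.add_apply] at e
    ring_nf at e ⊢
    linarith
  -- symmetry of B
  have hsym : ∑ k, un k * B.mulVec un1 k = ∑ k, un1 k * B.mulVec un k := by
    have h1 : dotProduct un (B.mulVec un1) = dotProduct (B.mulVec un) un1 := by
      rw [Matrix.dotProduct_mulVec, ← Matrix.mulVec_transpose, hB.eq]
    simpa [dotProduct, mul_comm] using h1
  -- energy identity for the u-part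
  have ha : ∑ k, (un1 k - un k) * (un1 k - un k)
      = (h / 2) * ((∑ k, un1 k * B.mulVec un1 k) - (∑ k, un k * B.mulVec un k)
          + ((∑ k, un1 k * B.mulVec un k) - (∑ k, un k * B.mulVec un1 k))
          + (∑ k, γp k * un1 k ^ 2) - (∑ k, γp k * un k ^ 2)) := by
    have key : ∀ k ∈ Finset.univ, (un1 k - un k) * (un1 k - un k)
        = (h / 2) * (un1 k * B.mulVec un1 k - un k * B.mulVec un k
            + (un1 k * B.mulVec un k - un k * B.mulVec un1 k)
            + γp k * un1 k ^ 2 - γp k * un k ^ 2) := by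
      intro k _
      have e : (un1 k - un k) * (un1 k - un k) = (un1 k - un k) *
          ((h / 2) * (B.mulVec un1 k + B.mulVec un k + γp k * (un1 k + un k))) := by
        rw [← hpt k]
      linear_combination e
    rw [Finset.sum_congr rfl key, ← Finset.mul_sum]
    congr 1
    simp only [Finset.sum_sub_distrib, Finset.sum_add_distrib]
  have ha' : (1 / h) * ∑ k, (un1 k - un k) * (un1 k - un k)
      = (1 / 2) * ((∑ k, un1 k * B.mulVec un1 k) - (∑ k, un k * B.mulVec un k)
          + (∑ k, γp k * un1 k ^ 2) - (∑ k, γp k * un k ^ 2)) := by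
    rw [ha, hsym]
    field_simp
    ring
  -- relaxation identity for the γ-part
  have hg : (3 / 4) * ∑ k, (γp k - γm k) * (γp k - γm k)
      = (1 / 2) * ((∑ k, γp k * un k ^ 2) - (∑ k, γm k * un k ^ 2))
        + (1 / 4) * ((∑ k, γm k * γm k) - (∑ k, γp k * γp k)) := by
    have key : ∀ k ∈ Finset.univ, (3 / 4 : ℝ) * ((γp k - γm k) * (γp k - γm k))
        = (1 / 2) * (γp k * un k ^ 2 - γm k * un k ^ 2)
          + (1 / 4) * (γm k * γm k - γp k * γp k) := by
      intro k _
      have e : γp k = (1 / 2) * γm k + (1 / 2) * un k ^ 2 := by rw [hrelax]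
      rw [e]; ring
    rw [Finset.mul_sum, Finset.sum_congr rfl key, Finset.sum_add_distrib]
    simp only [← Finset.mul_sum, Finset.sum_sub_distrib]
  have main : (1 / h) * (δx * ∑ k, (un1 k - un k) * (un1 k - un k)) +
        (3 / 4) * (δx * ∑ k, (γp k - γm k) * (γp k - γm k)) =
      (-(1 / 2) * (δx * ∑ k, un k * B.mulVec un k) -
          (1 / 2) * (δx * ∑ k, γm k * un k ^ 2) +
          (1 / 4) * (δx * ∑ k, γm k * γm k)) -
        (-(1 / 2) * (δx * ∑ k, un1 k * B.mulVec un1 k) -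
          (1 / 2) * (δx * ∑ k, γp k * un1 k ^ 2) +
          (1 / 4) * (δx * ∑ k, γp k * γp k)) := by
    linear_combination δx * ha' + δx * hg
  refine ⟨main, ?_⟩
  have n1 : (0:ℝ) ≤ ∑ k, (un1 k - un k) * (un1 k - un k) :=
    Finset.sum_nonneg fun k _ => mul_self_nonneg _
  have n2 : (0:ℝ) ≤ ∑ k, (γp k - γm k) * (γp k - γm k) :=
    Finset.sum_nonneg fun k _ => mul_self_nonneg _
  nlinarith [mul_nonneg hδx.le n1, mul_nonneg hδx.le n2,
    mul_nonneg (le_of_lt (one_div_pos.mpr hh)) (mul_nonneg hδx.le n1)]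
end
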